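/- Let W = [W1; W2] be an (m+p)×m minimum-phase matrix over K = RatFunc ℂ, where the m×m block W1 is invertible over K, and set H := W2 W1⁻¹. Then the following are equivalent: (i) H is stable, i.e. every entry of H is proper and every pole α of H satisfies |α| ≤ 1; (ii) W1 is minimum-phase. (Theorem 3.2 of the paper: the deterministic relation H is stable if and only if the square block W1 of a minimum-phase factor is minimum-phase.) -/

import Mathlib

open Matrix

set_option maxHeartbeats 1000000
set_option synthInstance.maxHeartbeats 400000
set_option linter.unusedSectionVars false
set_option linter.unusedVariables false

noncomputable section

abbrev K : Type := RatFunc ℂ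

/-- `α` is a pole of `q`: a root of the denominator of `q` in lowest terms. -/
def IsPole (α : ℂ) (q : K) : Prop := Polynomial.eval α (RatFunc.denom q) = 0

/-- `α` is a pole of a matrix if it is a pole of some entry. -/
def MIsPole {I J : Type} (α : ℂ) (W : Matrix I J K) : Prop := ∃ i j, IsPole α (W i j)

/-- Evaluation of a rational function at a point. -/
def evalAt (α : ℂ) (q : K) : ℂ := RatFunc.eval (RingHom.id ℂ) α q

/-- Entrywise evaluation of a matrix of rational functions. -/
def MEval {I J : Type} (α : ℂ) (W : Matrix I J K) : Matrix I J ℂ := W.map (evalAt α)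

/-- `W*`: the transpose of the entrywise application of `σ`. -/
def paraStar {I J : Type} (σ : K →+* K) (W : Matrix I J K) : Matrix J I K := (W.map σ)ᵀ

/-- `q` is proper: `0` is not a pole of `τ q` (where `τ` maps `X` to `X⁻¹`). -/
def Proper (τ : K →+* K) (q : K) : Prop := ¬ IsPole 0 (τ q)

/-- Discrete-time minimum phase: entries proper, all poles strictly inside the unit
circle, full column rank at every point outside the closed unit disc and at infinity. -/
def MinPhaseD (τ : K →+* K) {n m : Type} [Fintype n] [Fintype m]
    (W : Matrix n m K) : Prop :=
  (∀ i j, Proper τ (W i j)) ∧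
  (∀ α : ℂ, MIsPole α W → ‖α‖ < 1) ∧
  (∀ α : ℂ, 1 < ‖α‖ → (MEval α W).rank = Fintype.card m) ∧
  (MEval 0 (W.map τ)).rank = Fintype.card m

section Helpers

variable {α : ℂ}

lemma eval_ne_zero_of_dvd {d n : Polynomial ℂ} (h : d ∣ n)
    (hn : Polynomial.eval α n ≠ 0) : Polynomial.eval α d ≠ 0 := by
  obtain ⟨c, rfl⟩ := h
  intro h0
  rw [Polynomial.eval_mul, h0, zero_mul] at hn
  exact hn rfl

/-- The subring of rational functions having no pole at `α`. -/
def nonPole (α : ℂ) : Subring K where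
  carrier := {q | ¬ IsPole α q}
  zero_mem' := by simp [IsPole, RatFunc.denom_zero]
  one_mem' := by simp [IsPole, RatFunc.denom_one]
  add_mem' := fun {a b} ha hb => eval_ne_zero_of_dvd (RatFunc.denom_add_dvd a b)
    (by rw [Polynomial.eval_mul]; exact mul_ne_zero ha hb)
  mul_mem' := fun {a b} ha hb => eval_ne_zero_of_dvd (RatFunc.denom_mul_dvd a b)
    (by rw [Polynomial.eval_mul]; exact mul_ne_zero ha hb)
  neg_mem' := fun {a} ha => by
    have h1 : (-a : K) = -1 * a := (neg_one_mul a).symm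
    have hm : RatFunc.denom (-1 : K) = 1 := by
      have h2 : (-1 : K) = algebraMap (Polynomial ℂ) K (-1) := by simp
      rw [h2, RatFunc.denom_algebraMap]
    have hd : RatFunc.denom (-a : K) ∣ RatFunc.denom (-1 : K) * RatFunc.denom a := by
      rw [h1]; exact RatFunc.denom_mul_dvd _ _
    refine eval_ne_zero_of_dvd hd ?_
    rw [hm, one_mul]
    exact ha

lemma eval₂_denom_ne_zero {q : K} (h : q ∈ nonPole α) :
    Polynomial.eval₂ (RingHom.id ℂ) α (RatFunc.denom q) ≠ 0 := h

lemma evalAt_eq (q : K) :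
    evalAt α q = Polynomial.eval α (RatFunc.num q) / Polynomial.eval α (RatFunc.denom q) := rfl

/-- Evaluation at `α` is a ring homomorphism on `nonPole α`. -/
def evalHom (α : ℂ) : nonPole α →+* ℂ where
  toFun q := evalAt α q.1
  map_one' := by simp [evalAt, RatFunc.eval_one]
  map_zero' := by simp [evalAt, RatFunc.eval_zero]
  map_add' x y := by
    exact RatFunc.eval_add (f := RingHom.id ℂ) (a := α) (x := (x : K)) (y := (y : K))
      (eval₂_denom_ne_zero x.2) (eval₂_denom_ne_zero y.2)
  map_mul' x y := by
    exact RatFunc.eval_mul (f := RingHom.id ℂ) (a := α) (x := (x : K)) (y := (y : K))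
      (eval₂_denom_ne_zero x.2) (eval₂_denom_ne_zero y.2)

variable {I J L : Type} [Fintype I] [Fintype J] [Fintype L]

/-- Lift a matrix all of whose entries have no pole at `α` to a matrix over `nonPole α`. -/
def liftMat (A : Matrix I J K) (h : ∀ i j, ¬ IsPole α (A i j)) : Matrix I J (nonPole α) :=
  Matrix.of fun i j => (⟨A i j, h i j⟩ : nonPole α)

lemma liftMat_coe (A : Matrix I J K) (h : ∀ i j, ¬ IsPole α (A i j)) :
    (liftMat A h).map (nonPole α).subtype = A := rfl

lemma MEval_lift (A : Matrix I J K) (h : ∀ i j, ¬ IsPole α (A i j)) :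
    MEval α A = (liftMat A h).map (evalHom α) := rfl

lemma MEval_mul (A : Matrix I L K) (B : Matrix L J K)
    (hA : ∀ i j, ¬ IsPole α (A i j)) (hB : ∀ i j, ¬ IsPole α (B i j)) :
    MEval α (A * B) = MEval α A * MEval α B := by
  have hAB : ∀ i j, ¬ IsPole α ((A * B) i j) := by
    intro i j
    have : (A * B) i j ∈ nonPole α := by
      rw [Matrix.mul_apply]
      exact Subring.sum_mem _ fun k _ => Subring.mul_mem _ (hA i k) (hB k j)
    exact this
  have hco : (liftMat A hA * liftMat B hB).map (nonPole α).subtype = A * B := by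
    rw [Matrix.map_mul, liftMat_coe, liftMat_coe]
  have hlift : liftMat (A * B) hAB = liftMat A hA * liftMat B hB := by
    ext i j
    show (A * B) i j = ((liftMat A hA * liftMat B hB).map (nonPole α).subtype) i j
    exact (congrFun (congrFun hco i) j).symm
  rw [MEval_lift (A * B) hAB, hlift, Matrix.map_mul, MEval_lift A hA, MEval_lift B hB]

lemma det_notPole [DecidableEq I] {A : Matrix I I K} (h : ∀ i j, ¬ IsPole α (A i j)) :
    ¬ IsPole α A.det := by
  have hdet : (((liftMat A h).det : nonPole α) : K) = A.det := by
    have h2 := RingHom.map_det (nonPole α).subtype (liftMat A h)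
    rw [RingHom.mapMatrix_apply, liftMat_coe] at h2
    exact h2
  rw [← hdet]
  exact ((liftMat A h).det).2

lemma evalAt_det [DecidableEq I] {A : Matrix I I K} (h : ∀ i j, ¬ IsPole α (A i j)) :
    evalAt α A.det = (MEval α A).det := by
  have hdet : (((liftMat A h).det : nonPole α) : K) = A.det := by
    have h2 := RingHom.map_det (nonPole α).subtype (liftMat A h)
    rw [RingHom.mapMatrix_apply, liftMat_coe] at h2
    exact h2
  calc evalAt α A.det = evalHom α ((liftMat A h).det) := by rw [← hdet]; rfl
    _ = ((liftMat A h).map (evalHom α)).det := by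
        rw [RingHom.map_det, RingHom.mapMatrix_apply]
    _ = (MEval α A).det := by rw [← MEval_lift A h]

lemma inv_notPole {q : K} (hq : ¬ IsPole α q) (h0 : evalAt α q ≠ 0) : ¬ IsPole α q⁻¹ := by
  have hnum : Polynomial.eval α (RatFunc.num q) ≠ 0 := by
    intro h
    exact h0 (by rw [evalAt_eq, h, zero_div])
  have hinv : q⁻¹ = algebraMap (Polynomial ℂ) K (RatFunc.denom q)
      / algebraMap (Polynomial ℂ) K (RatFunc.num q) := by
    conv_lhs => rw [← RatFunc.num_div_denom q]
    rw [inv_div]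
  have hdvd : RatFunc.denom (q⁻¹) ∣ RatFunc.num q := by
    rw [hinv]; exact RatFunc.denom_div_dvd _ _
  exact eval_ne_zero_of_dvd hdvd hnum

lemma adjugate_notPole [DecidableEq I] {A : Matrix I I K} (h : ∀ i j, ¬ IsPole α (A i j))
    (i j : I) : ¬ IsPole α (A.adjugate i j) := by
  rw [Matrix.adjugate_apply]
  apply det_notPole
  intro i' j'
  rw [Matrix.updateRow_apply]
  split
  · rw [Pi.single_apply]
    split
    · exact (nonPole α).one_mem
    · exact (nonPole α).zero_mem
  · exact h i' j'

lemma inv_entry_notPole [DecidableEq I] {A : Matrix I I K} (h : ∀ i j, ¬ IsPole α (A i j))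
    (hdet : (MEval α A).det ≠ 0) (i j : I) : ¬ IsPole α (A⁻¹ i j) := by
  have hde : evalAt α A.det ≠ 0 := by rw [evalAt_det h]; exact hdet
  have hrepr : A⁻¹ i j = (A.det)⁻¹ * A.adjugate i j := by
    rw [Matrix.inv_def, Matrix.smul_apply, Ring.inverse_eq_inv, smul_eq_mul]
  rw [hrepr]
  exact Subring.mul_mem (nonPole α) (inv_notPole (det_notPole h) hde) (adjugate_notPole h i j)

lemma det_ne_zero_of_rank {n : ℕ} {A : Matrix (Fin n) (Fin n) ℂ} (h : A.rank = n) :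
    A.det ≠ 0 := by
  intro hdet
  obtain ⟨v, hv, hAv⟩ := Matrix.exists_mulVec_eq_zero_iff.mpr hdet
  have hker : v ∈ LinearMap.ker A.mulVecLin := by
    simpa [Matrix.mulVecLin_apply] using hAv
  have hrank : Module.finrank ℂ (LinearMap.range A.mulVecLin)
      + Module.finrank ℂ (LinearMap.ker A.mulVecLin) = n := by
    rw [LinearMap.finrank_range_add_finrank_ker]
    simp
  have hA : A.rank = Module.finrank ℂ (LinearMap.range A.mulVecLin) := rfl
  have h0 : Module.finrank ℂ (LinearMap.ker A.mulVecLin) = 0 := by omega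
  have hbot : LinearMap.ker A.mulVecLin = ⊥ := Submodule.finrank_eq_zero.mp h0
  rw [hbot] at hker
  simp only [Submodule.mem_bot] at hker
  exact hv hker

lemma MEval_fromRows {I1 I2 : Type} (A : Matrix I1 J K) (B : Matrix I2 J K) :
    MEval α (Matrix.fromRows A B) = Matrix.fromRows (MEval α A) (MEval α B) := by
  ext i j; cases i <;> rfl

lemma map_fromRows {R S : Type*} {I1 I2 J' : Type} (f : R → S) (A : Matrix I1 J' R)
    (B : Matrix I2 J' R) :
    (Matrix.fromRows A B).map f = Matrix.fromRows (A.map f) (B.map f) := by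
  ext i j; cases i <;> rfl

lemma rank_block {m p : ℕ} {A : Matrix (Fin m) (Fin m) ℂ} {C : Matrix (Fin p) (Fin m) ℂ}
    (h : (Matrix.fromRows A (C * A)).rank = m) : A.rank = m := by
  have h1 : Matrix.fromRows A (C * A) = Matrix.fromRows (1 : Matrix (Fin m) (Fin m) ℂ) C * A := by
    rw [Matrix.fromRows_mul, Matrix.one_mul]
  refine le_antisymm ?_ ?_
  · simpa using A.rank_le_card_width
  · calc m = (Matrix.fromRows A (C * A)).rank := h.symm
      _ ≤ A.rank := by rw [h1]; exact Matrix.rank_mul_le_right _ _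

end Helpers

theorem H_stable_iff_W1_minimum_phase (m p : ℕ)
    (σ : K →+* K)
    (hσC : ∀ c : ℂ, σ (RatFunc.C c) = RatFunc.C ((starRingEnd ℂ) c))
    (hσX : σ RatFunc.X = RatFunc.X⁻¹)
    (τ : K →+* K)
    (hτC : ∀ c : ℂ, τ (RatFunc.C c) = RatFunc.C c)
    (hτX : τ RatFunc.X = RatFunc.X⁻¹)
    (W1 : Matrix (Fin m) (Fin m) K) (W2 : Matrix (Fin p) (Fin m) K)
    (hW1 : IsUnit W1.det)
    (hWmp : MinPhaseD τ (Matrix.fromRows W1 W2)) :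
    ((∀ i j, Proper τ ((W2 * W1⁻¹) i j)) ∧
      (∀ α : ℂ, MIsPole α (W2 * W1⁻¹) → ‖α‖ ≤ 1))
    ↔ MinPhaseD τ W1 := by
  obtain ⟨hWprop, hWpole, hWrank, hWinf⟩ := hWmp
  have hW2eq : W2 = (W2 * W1⁻¹) * W1 := (Matrix.nonsing_inv_mul_cancel_right W1 W2 hW1).symm
  have hW1np : ∀ α : ℂ, 1 ≤ ‖α‖ → ∀ i j, ¬ IsPole α (W1 i j) := by
    intro α hα i j hij
    exact absurd (hWpole α ⟨Sum.inl i, j, hij⟩) (not_lt.mpr hα)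
  have hW2np : ∀ α : ℂ, 1 ≤ ‖α‖ → ∀ i j, ¬ IsPole α (W2 i j) := by
    intro α hα i j hij
    exact absurd (hWpole α ⟨Sum.inr i, j, hij⟩) (not_lt.mpr hα)
  have hW1prop : ∀ i j, ¬ IsPole 0 ((W1.map τ) i j) := fun i j => hWprop (Sum.inl i) j
  have hW2prop : ∀ i j, ¬ IsPole 0 ((W2.map τ) i j) := fun i j => hWprop (Sum.inr i) j
  constructor
  · rintro ⟨hHprop, hHpole⟩
    refine ⟨fun i j => hWprop (Sum.inl i) j,
      fun α hα => hWpole α (by obtain ⟨i, j, hij⟩ := hα; exact ⟨Sum.inl i, j, hij⟩), ?_, ?_⟩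
    · intro α hα
      have hHe : ∀ i j, ¬ IsPole α ((W2 * W1⁻¹) i j) := fun i j hp =>
        absurd (hHpole α ⟨i, j, hp⟩) (not_le.mpr hα)
      have h2 : MEval α W2 = MEval α (W2 * W1⁻¹) * MEval α W1 := by
        conv_lhs => rw [hW2eq]
        exact MEval_mul _ _ hHe (hW1np α hα.le)
      have hr := hWrank α hα
      rw [MEval_fromRows, h2] at hr
      simp only [Fintype.card_fin] at hr ⊢
      exact rank_block hr
    · have h2 : MEval 0 (W2.map τ) = MEval 0 ((W2 * W1⁻¹).map τ) * MEval 0 (W1.map τ) := by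
        have : W2.map τ = (W2 * W1⁻¹).map τ * W1.map τ := by
          conv_lhs => rw [hW2eq]
          exact Matrix.map_mul
        rw [this]
        exact MEval_mul _ _ (fun i j => hHprop i j) hW1prop
      have hr := hWinf
      rw [map_fromRows, MEval_fromRows, h2] at hr
      simp only [Fintype.card_fin] at hr ⊢
      exact rank_block hr
  · rintro ⟨h1prop, h1pole, h1rank, h1inf⟩
    constructor
    · intro i j
      have hdetinf : (MEval 0 (W1.map τ)).det ≠ 0 :=
        det_ne_zero_of_rank (by simpa using h1inf)
      have hmapinv : (W1⁻¹).map τ = (W1.map τ)⁻¹ := by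
        refine (Matrix.inv_eq_right_inv ?_).symm
        rw [← Matrix.map_mul, Matrix.mul_nonsing_inv W1 hW1,
          Matrix.map_one _ (map_zero τ) (map_one τ)]
      have hentry : τ ((W2 * W1⁻¹) i j) = (W2.map τ * (W1.map τ)⁻¹) i j := by
        rw [← hmapinv, ← Matrix.map_mul]
        rfl
      show ¬ IsPole 0 (τ ((W2 * W1⁻¹) i j))
      rw [hentry, Matrix.mul_apply]
      exact Subring.sum_mem (nonPole 0) fun k _ => Subring.mul_mem _ (hW2prop i k)
        (inv_entry_notPole hW1prop hdetinf k j)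
    · rintro α ⟨i, j, hij⟩
      by_contra hgt
      push_neg at hgt
      have hdet : (MEval α W1).det ≠ 0 :=
        det_ne_zero_of_rank (by simpa using h1rank α hgt)
      have : (W2 * W1⁻¹) i j ∈ nonPole α := by
        rw [Matrix.mul_apply]
        exact Subring.sum_mem (nonPole α) fun k _ => Subring.mul_mem _ (hW2np α hgt.le i k)
          (inv_entry_notPole (hW1np α hgt.le) hdet k j)
      exact this hij
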